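/- arXiv:1808.01046 — 2 statements merged into one kernel-verified Lean document; each statement's English description precedes it below -/
import Mathlib

section
/- Let λ be a partition of n−1 and λ' a partition of n with λ ⊆ λ'. If f : {1,...,n−1} → {1,...,n} is an injection with f_*(I_λ) ⊆ I_{λ'} (where f_* is the inclusion of polynomial rings sending x_i ↦ x_{f(i)}), then I_{λ'} = ⟨x_1,...,x_n⟩, i.e., the quotient R_n/I_{λ'} ≅ ℂ is the trivial representation, which forces λ' to be a single row. -/
open MvPolynomial Finset

variable (F : Type*) [Field F]

/-- The elementary symmetric polynomial `e_i(S)` in the set of variables `S`. -/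
noncomputable def esymS (S : Finset ℕ) (i : ℕ) : MvPolynomial ℕ F :=
  ∑ T ∈ S.powersetCard i, ∏ j ∈ T, X j

/-- Height of column `c` (0-indexed) of the Young diagram with row lengths `l`. -/
def colHeight (l : List ℕ) (c : ℕ) : ℕ := (l.filter (fun r => c < r)).length

/-- Number of non-top-row boxes in the columns strictly to the left of column `c`;
these boxes receive the first labels of the BFR-filling. -/
def bfrOffset (l : List ℕ) (c : ℕ) : ℕ := ∑ c' ∈ Finset.range c, (colHeight l c' - 1)

/-- The BFR-filling labels appearing in column `c`: labels of the non-top boxes of column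
`c` (filled bottom to top, column by column), together with the label `n - c` of its
top-row box (the top row is filled right to left with `n - λ_1 + 1, ..., n`). -/
def bfrLabels (l : List ℕ) (c : ℕ) : Finset ℕ :=
  Finset.Icc (bfrOffset l c + 1) (bfrOffset l c + (colHeight l c - 1)) ∪ {l.sum - c}

/-- The Tanisaki ideal `I_λ`, generated by the Biagioli-Faridi-Rosas generators: for each
box of the BFR-filling labeled `i` whose column has top-row label `j = n - c`, all
elementary symmetric polynomials `e_i(S)` with `S ⊆ {x_1,...,x_n}`, `|S| = j`. -/
noncomputable def tanisaki (l : List ℕ) : Ideal (MvPolynomial ℕ F) :=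
  Ideal.span {p | ∃ c : ℕ, c < l.headD 0 ∧ ∃ i ∈ bfrLabels l c, ∃ S : Finset ℕ,
    S ⊆ Finset.Icc 1 l.sum ∧ S.card = l.sum - c ∧ p = esymS F S i}

/-- `l` is a partition of `n`: weakly decreasing, positive parts, total `n`. -/
def IsPartitionOf (n : ℕ) (l : List ℕ) : Prop :=
  l.Pairwise (· ≥ ·) ∧ (∀ x ∈ l, 0 < x) ∧ l.sum = n

/- ----------------- auxiliary lemmas ----------------- -/

open DualNumber

set_option synthInstance.maxHeartbeats 1000000
set_option maxHeartbeats 1000000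

lemma esymS_one' (S : Finset ℕ) : esymS ℂ S 1 = ∑ j ∈ S, X j := by
  rw [esymS, powersetCard_one, Finset.sum_map]
  simp

lemma eps_pow' (i : ℕ) (hi : 2 ≤ i) : (ε : DualNumber ℂ) ^ i = 0 := by
  obtain ⟨k, rfl⟩ := Nat.exists_eq_add_of_le hi
  rw [pow_add, pow_two, eps_mul_eps, zero_mul]

lemma prod_smul_eps' (c : ℕ → ℂ) (T : Finset ℕ) :
    ∏ j ∈ T, (c j • (ε : DualNumber ℂ)) = (∏ j ∈ T, c j) • ε ^ T.card := by
  induction T using Finset.cons_induction with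
  | empty => simp
  | cons a s ha ih =>
      rw [Finset.prod_cons, ih, Finset.prod_cons, Finset.card_cons, pow_succ',
        smul_mul_smul_comm (c a) (ε : DualNumber ℂ) (∏ j ∈ s, c j) (ε ^ s.card)]

lemma phi_prod' (c : ℕ → ℂ) (T : Finset ℕ) :
    aeval (fun j => c j • (ε : DualNumber ℂ)) (∏ j ∈ T, (X j : MvPolynomial ℕ ℂ)) =
      (∏ j ∈ T, c j) • ε ^ T.card := by
  rw [map_prod]
  simp only [aeval_X]
  exact prod_smul_eps' c T

lemma phi_esymS' (c : ℕ → ℂ) (S : Finset ℕ) (i : ℕ) (hi : 2 ≤ i) :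
    aeval (fun j => c j • (ε : DualNumber ℂ)) (esymS ℂ S i) = 0 := by
  rw [esymS, map_sum]
  apply Finset.sum_eq_zero
  intro T hT
  rw [Finset.mem_powersetCard] at hT
  rw [phi_prod', hT.2, eps_pow' i hi, smul_zero]

lemma phi_linear' (c : ℕ → ℂ) (S : Finset ℕ) :
    aeval (fun j => c j • (ε : DualNumber ℂ)) (∑ j ∈ S, (X j : MvPolynomial ℕ ℂ)) =
      (∑ j ∈ S, c j) • ε := by
  rw [map_sum]
  simp only [aeval_X]
  rw [Finset.sum_smul]

lemma tanisaki_single' (m : ℕ) (hm : 1 ≤ m) :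
    tanisaki ℂ [m] = Ideal.span ((fun i : ℕ => (X i : MvPolynomial ℕ ℂ)) '' Set.Icc 1 m) := by
  have hsum : ([m] : List ℕ).sum = m := by simp
  apply le_antisymm
  · rw [tanisaki, Ideal.span_le]
    rintro p ⟨c, hc, i, hi, S, hS, hcard, rfl⟩
    rw [SetLike.mem_coe]
    have hc' : c < m := by simpa using hc
    have hi1 : 1 ≤ i := by
      rw [bfrLabels, Finset.mem_union, Finset.mem_Icc, Finset.mem_singleton] at hi
      rcases hi with ⟨h1, _⟩ | rfl
      · omega
      · rw [hsum]; omega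
    rw [esymS]
    apply Ideal.sum_mem
    intro T hT
    rw [Finset.mem_powersetCard] at hT
    obtain ⟨hTS, hTc⟩ := hT
    have hTne : T.Nonempty := Finset.card_pos.mp (by omega)
    obtain ⟨j, hj⟩ := hTne
    rw [← Finset.mul_prod_erase T _ hj]
    apply Ideal.mul_mem_right
    apply Ideal.subset_span
    refine ⟨j, ?_, rfl⟩
    have h2 := hS (hTS hj)
    rw [hsum, Finset.mem_Icc] at h2
    exact Set.mem_Icc.mpr h2
  · rw [Ideal.span_le]
    rintro p ⟨j, hj, rfl⟩
    rw [SetLike.mem_coe, tanisaki]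
    apply Ideal.subset_span
    rw [Set.mem_Icc] at hj
    refine ⟨m - 1, by simp only [List.headD_cons]; omega, 1, ?_, {j}, ?_, ?_, ?_⟩
    · apply Finset.mem_union_right
      rw [Finset.mem_singleton, hsum]
      omega
    · rw [Finset.singleton_subset_iff, hsum, Finset.mem_Icc]; exact hj
    · rw [Finset.card_singleton, hsum]; omega
    · rw [esymS_one', Finset.sum_singleton]

lemma no_two_rows' (n : ℕ) (hn : 2 ≤ n) (l' : List ℕ) (hl' : IsPartitionOf n l')
    (h2 : 2 ≤ l'.length) (A : Finset ℕ) (hA : A ⊆ Finset.Icc 1 n)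
    (hAne : A.Nonempty) (hAcard : A.card < n)
    (hL : (∑ j ∈ A, (X j : MvPolynomial ℕ ℂ)) ∈ tanisaki ℂ l') : False := by
  obtain ⟨hsort, hpos, hsum⟩ := hl'
  have hhead : l'.headD 0 + 1 ≤ n := by
    rcases l' with _ | ⟨a, l''⟩
    · simp at h2
    rcases l'' with _ | ⟨b, t⟩
    · simp at h2
    have hb : 0 < b := hpos b (by simp)
    have hs : a + (b + t.sum) = n := by simpa using hsum
    show a + 1 ≤ n
    omega
  have hch : colHeight l' 0 = l'.length := by
    unfold colHeight
    rw [List.filter_eq_self.mpr]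
    intro x hx; simpa using hpos x hx
  have hoff : ∀ c, 1 ≤ c → 1 ≤ bfrOffset l' c := by
    intro c hc
    have h0 : colHeight l' 0 - 1 ≤ bfrOffset l' c :=
      Finset.single_le_sum (f := fun c' => colHeight l' c' - 1) (fun _ _ => Nat.zero_le _)
        (Finset.mem_range.mpr hc)
    omega
  have hlabel : ∀ c i, c < l'.headD 0 → i ∈ bfrLabels l' c → 1 ≤ i ∧ (i = 1 → c = 0) := by
    intro c i hc hi
    rw [bfrLabels, Finset.mem_union, Finset.mem_Icc, Finset.mem_singleton] at hi
    rcases hi with ⟨h1, _⟩ | rfl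
    · refine ⟨by omega, ?_⟩
      intro h1'
      by_contra hc0
      have := hoff c (by omega)
      omega
    · rw [hsum]
      exact ⟨by omega, by omega⟩
  obtain ⟨j1, hj1⟩ := hAne
  obtain ⟨j0, hj0n, hj0A⟩ : ∃ j0 ∈ Finset.Icc 1 n, j0 ∉ A := by
    by_contra h
    push_neg at h
    have hsub : Finset.Icc 1 n ⊆ A := h
    have hcc := Finset.card_le_card hsub
    rw [Nat.card_Icc] at hcc
    omega
  set cf : ℕ → ℂ := fun j => (if j = j1 then (1 : ℂ) else 0) + (if j = j0 then (-1 : ℂ) else 0)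
    with hcf
  have key : ∀ B : Finset ℕ, ∑ j ∈ B, cf j =
      (if j1 ∈ B then (1 : ℂ) else 0) + (if j0 ∈ B then (-1 : ℂ) else 0) := by
    intro B
    simp only [hcf]
    rw [Finset.sum_add_distrib, Finset.sum_ite_eq', Finset.sum_ite_eq']
  have hker : tanisaki ℂ l' ≤
      RingHom.ker (aeval (fun j => cf j • (ε : DualNumber ℂ)) :
        MvPolynomial ℕ ℂ →ₐ[ℂ] DualNumber ℂ) := by
    rw [tanisaki, Ideal.span_le]
    rintro p ⟨c, hc, i, hi, S, hS, hcard, rfl⟩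
    obtain ⟨hi1, hione⟩ := hlabel c i hc hi
    rw [SetLike.mem_coe, RingHom.mem_ker]
    rcases eq_or_lt_of_le hi1 with h1 | h2'
    · subst h1
      have hc0 : c = 0 := hione rfl
      subst hc0
      have hSeq : S = Finset.Icc 1 n := by
        apply Finset.eq_of_subset_of_card_le
        · rw [hsum] at hS; exact hS
        · rw [Nat.card_Icc]; rw [hsum] at hcard; omega
      rw [esymS_one', phi_linear', hSeq, key, if_pos (hA hj1), if_pos hj0n]
      norm_num
    · exact phi_esymS' _ _ _ h2'
  have hmem := hker hL
  rw [RingHom.mem_ker, phi_linear', key, if_pos hj1, if_neg hj0A] at hmem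
  have heq : (ε : DualNumber ℂ) = 0 := by
    rw [← one_smul ℂ (ε : DualNumber ℂ)]
    rw [show (1 : ℂ) = 1 + 0 by ring]
    exact hmem
  have hsnd := congrArg TrivSqZeroExt.snd heq
  simp at hsnd

/-- If `λ ⊆ λ'` are partitions of `n-1` and `n`, and `f : {1,...,n-1} → {1,...,n}` is an
injection whose induced inclusion `f_* : x_i ↦ x_{f(i)}` satisfies `f_*(I_λ) ⊆ I_{λ'}`,
then `I_{λ'} = ⟨x_1,...,x_n⟩`; i.e. `R_n/I_{λ'} ≅ ℂ` is trivial, forcing `λ'` to be a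
single row. -/
theorem stmt18 (n : ℕ) (hn : 2 ≤ n) (l l' : List ℕ)
    (hl : IsPartitionOf (n - 1) l) (hl' : IsPartitionOf n l')
    (hsub : ∀ j : ℕ, l.getD j 0 ≤ l'.getD j 0)
    (f : ℕ → ℕ) (hmaps : Set.MapsTo f (Set.Icc 1 (n - 1)) (Set.Icc 1 n))
    (hinj : Set.InjOn f (Set.Icc 1 (n - 1)))
    (hpush : ∀ p ∈ tanisaki ℂ l, rename f p ∈ tanisaki ℂ l') :
    tanisaki ℂ l' = Ideal.span ((fun i : ℕ => (X i : MvPolynomial ℕ ℂ)) '' Set.Icc 1 n) ∧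
      l'.length = 1 := by
  obtain ⟨hs', hp', hsum'⟩ := hl'
  have hne' : l' ≠ [] := by
    intro h; rw [h] at hsum'; simp at hsum'; omega
  rcases Nat.lt_or_ge l'.length 2 with hlen | hlen
  · have h1 : l'.length = 1 := by
      have h0 : l'.length ≠ 0 := fun h => hne' (List.length_eq_zero_iff.mp h)
      omega
    obtain ⟨a, rfl⟩ : ∃ a, l' = [a] := List.length_eq_one_iff.mp h1
    have ha : a = n := by simpa using hsum'
    subst ha
    exact ⟨tanisaki_single' a (by omega), rfl⟩
  · exfalso
    obtain ⟨hs, hp, hsum⟩ := hl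
    have hln : l ≠ [] := by
      intro h; rw [h] at hsum; simp at hsum; omega
    rcases Nat.lt_or_ge l.length 2 with hl1 | hl2
    · -- l is a single row [n-1]; a variable lies in I_λ
      obtain ⟨a, rfl⟩ : ∃ a, l = [a] := by
        apply List.length_eq_one_iff.mp
        have := List.length_pos_iff.mpr hln
        omega
      have ha : a = n - 1 := by simpa using hsum
      subst ha
      have hX : (X 1 : MvPolynomial ℕ ℂ) ∈ tanisaki ℂ [n - 1] := by
        rw [tanisaki]
        apply Ideal.subset_span
        refine ⟨n - 2, by simp only [List.headD_cons]; omega, 1, ?_, {1}, ?_, ?_, ?_⟩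
        · apply Finset.mem_union_right
          rw [Finset.mem_singleton]
          simp; omega
        · rw [Finset.singleton_subset_iff, Finset.mem_Icc]
          simp; omega
        · rw [Finset.card_singleton]
          simp; omega
        · rw [esymS_one', Finset.sum_singleton]
      have hXf := hpush _ hX
      rw [rename_X] at hXf
      have h1mem : (1 : ℕ) ∈ Set.Icc 1 (n - 1) := by
        rw [Set.mem_Icc]; omega
      refine no_two_rows' n hn l' ⟨hs', hp', hsum'⟩ hlen {f 1} ?_
        ⟨f 1, Finset.mem_singleton_self _⟩ ?_ ?_
      · intro x hx
        rw [Finset.mem_singleton] at hx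
        subst hx
        have hm := Set.mem_Icc.mp (hmaps h1mem)
        rw [Finset.mem_Icc]; exact hm
      · rw [Finset.card_singleton]; omega
      · rw [Finset.sum_singleton]; exact hXf
    · -- l has at least two rows; e_1(x_1,...,x_{n-1}) ∈ I_λ
      have hg : esymS ℂ (Finset.Icc 1 (n - 1)) 1 ∈ tanisaki ℂ l := by
        rw [tanisaki]
        apply Ideal.subset_span
        refine ⟨0, ?_, 1, ?_, Finset.Icc 1 (n - 1), ?_, ?_, rfl⟩
        · rcases l with _ | ⟨a, t⟩
          · exact absurd rfl hln
          simpa using hp a (by simp)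
        · apply Finset.mem_union_left
          rw [Finset.mem_Icc]
          have hoff0 : bfrOffset l 0 = 0 := by simp [bfrOffset]
          have hch : colHeight l 0 = l.length := by
            unfold colHeight
            rw [List.filter_eq_self.mpr]
            intro x hx; simpa using hp x hx
          rw [hoff0, hch]
          omega
        · rw [hsum]
        · rw [hsum, Nat.card_Icc]; omega
      have hrg := hpush _ hg
      rw [esymS_one', map_sum] at hrg
      simp only [rename_X] at hrg
      have hinj' : ∀ x ∈ Finset.Icc 1 (n - 1), ∀ y ∈ Finset.Icc 1 (n - 1), f x = f y → x = y := by
        intro x hx y hy hxy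
        rw [Finset.mem_Icc] at hx hy
        exact hinj (Set.mem_Icc.mpr hx) (Set.mem_Icc.mpr hy) hxy
      rw [← Finset.sum_image (g := f) (f := fun j => (X j : MvPolynomial ℕ ℂ)) hinj'] at hrg
      refine no_two_rows' n hn l' ⟨hs', hp', hsum'⟩ hlen
        ((Finset.Icc 1 (n - 1)).image f) ?_ ?_ ?_ hrg
      · intro x hx
        rw [Finset.mem_image] at hx
        obtain ⟨j, hj, rfl⟩ := hx
        rw [Finset.mem_Icc] at hj
        have hm := Set.mem_Icc.mp (hmaps (Set.mem_Icc.mpr hj))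
        rw [Finset.mem_Icc]; exact hm
      · refine Finset.Nonempty.image ⟨1, ?_⟩ f
        rw [Finset.mem_Icc]; omega
      · rw [Finset.card_image_of_injOn (by rw [Finset.coe_Icc]; exact hinj), Nat.card_Icc]
        omega
end

section
/- Let λ be a Young diagram with n−1 boxes and λ' the diagram obtained from λ by adding one box. Let ι_n* : ℚ[x_1,...,x_n] → ℚ[x_1,...,x_{n-1}] be the homomorphism with x_i ↦ x_i for i < n and x_n ↦ 0. Then ι_n*(I_{λ'}) ⊆ I_λ, where I_λ and I_{λ'} are the Tanisaki ideals. -/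
open MvPolynomial Finset

variable (F : Type*) [Field F]

lemma powersetCard_erase' (S : Finset ℕ) (a i : ℕ) :
    (S.erase a).powersetCard i = (S.powersetCard i).filter (fun T => a ∉ T) := by
  ext T
  simp only [Finset.mem_powersetCard, Finset.mem_filter, Finset.subset_erase]
  tauto

lemma esymS_zero_of_lt (S : Finset ℕ) (i : ℕ) (h : S.card < i) : esymS F S i = 0 := by
  unfold esymS
  rw [Finset.powersetCard_eq_empty.mpr h]
  simp


lemma sum_esymS_erase (S : Finset ℕ) (i : ℕ) :
    ∑ a ∈ S, esymS F (S.erase a) i = (S.card - i) • esymS F S i := by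
  unfold esymS
  have h1 : ∀ a ∈ S, ∑ T ∈ (S.erase a).powersetCard i, ∏ j ∈ T, (X j : MvPolynomial ℕ F)
      = ∑ T ∈ S.powersetCard i, if a ∉ T then ∏ j ∈ T, X j else 0 := by
    intro a _
    rw [powersetCard_erase', Finset.sum_filter]
  rw [Finset.sum_congr rfl h1, Finset.sum_comm, Finset.smul_sum]
  refine Finset.sum_congr rfl ?_
  intro T hT
  rw [Finset.sum_ite, Finset.sum_const, Finset.sum_const_zero, add_zero]
  congr 1
  have hTS : T ⊆ S := (Finset.mem_powersetCard.mp hT).1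
  have hTc : T.card = i := (Finset.mem_powersetCard.mp hT).2
  have : S.filter (fun a => a ∉ T) = S \ T := (Finset.sdiff_eq_filter S T).symm
  rw [this, Finset.card_sdiff_of_subset hTS, hTc]


lemma aeval_esymS (n : ℕ) (S : Finset ℕ) (hS : ∀ j ∈ S, j ≤ n) (i : ℕ) :
    (aeval fun j : ℕ => if j < n then X j else (0 : MvPolynomial ℕ F)) (esymS F S i)
      = esymS F (S.erase n) i := by
  unfold esymS
  rw [map_sum, powersetCard_erase', Finset.sum_filter]
  refine Finset.sum_congr rfl ?_
  intro T hT
  rw [map_prod]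
  by_cases hn : n ∈ T
  · rw [if_neg (by simp [hn])]
    apply Finset.prod_eq_zero hn
    simp [aeval_X]
  · rw [if_pos hn]
    refine Finset.prod_congr rfl ?_
    intro j hj
    have hjn : j < n := by
      have h1 : j ≤ n := hS j ((Finset.mem_powersetCard.mp hT).1 hj)
      have h2 : j ≠ n := fun h => hn (h ▸ hj)
      omega
    rw [aeval_X, if_pos hjn]



lemma colHeight_nil (c : ℕ) : colHeight [] c = 0 := rfl

lemma colHeight_cons (a : ℕ) (l : List ℕ) (c : ℕ) :
    colHeight (a :: l) c = (if c < a then 1 else 0) + colHeight l c := by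
  simp only [colHeight, List.filter_cons]
  by_cases h : c < a <;> simp [h, add_comm]

lemma colHeight_eq (l : List ℕ) (c : ℕ) :
    colHeight l c = ∑ j ∈ Finset.range l.length, if c < l.getD j 0 then 1 else 0 := by
  induction l with
  | nil => simp [colHeight]
  | cons a l ih =>
    rw [colHeight_cons, ih, List.length_cons, Finset.sum_range_succ']
    simp [add_comm]

lemma le_headD_of_mem {l : List ℕ} (hs : l.Pairwise (· ≥ ·)) {r : ℕ} (hr : r ∈ l) :
    r ≤ l.headD 0 := by
  cases l with
  | nil => simp at hr
  | cons a t =>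
    rcases List.mem_cons.mp hr with rfl | h
    · simp
    · exact ((List.pairwise_cons.mp hs).1 r h :)

lemma colHeight_pos_of_lt (l : List ℕ) (c : ℕ) (h : c < l.headD 0) :
    0 < colHeight l c := by
  cases l with
  | nil => simp at h
  | cons a t =>
    rw [colHeight_cons]
    simp only [List.headD_cons] at h
    simp [h]

lemma headD_lt_of_colHeight_pos {l : List ℕ} (hs : l.Pairwise (· ≥ ·)) (c : ℕ)
    (h : 0 < colHeight l c) : c < l.headD 0 := by
  induction l with
  | nil => simp [colHeight] at h
  | cons a t ih =>
    rw [colHeight_cons] at h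
    simp only [List.headD_cons]
    by_cases hca : c < a
    · exact hca
    · simp only [hca, if_false, zero_add] at h
      have := ih (List.pairwise_cons.mp hs).2 h
      have ht : t.headD 0 ≤ a := by
        cases t with
        | nil => simp
        | cons b t' => exact (List.pairwise_cons.mp hs).1 b (by simp)
      omega

lemma sum_colHeight (m : ℕ) (l : List ℕ) (h : ∀ r ∈ l, r ≤ m) :
    ∑ c ∈ Finset.range m, colHeight l c = l.sum := by
  induction l with
  | nil => simp [colHeight]
  | cons a t ih =>
    have ha : a ≤ m := h a (by simp)
    simp only [colHeight_cons, Finset.sum_add_distrib]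
    rw [ih (fun r hr => h r (by simp [hr])), List.sum_cons]
    congr 1
    rw [Finset.sum_ite, Finset.sum_const, Finset.sum_const_zero, add_zero, smul_eq_mul,
      mul_one]
    have : (Finset.range m).filter (fun c => c < a) = Finset.range a := by
      ext x; simp only [Finset.mem_filter, Finset.mem_range]; omega
    rw [this, Finset.card_range]

lemma length_le_of_sub {l l' : List ℕ} (hp : ∀ x ∈ l, 0 < x)
    (hsub : ∀ j, l.getD j 0 ≤ l'.getD j 0) : l.length ≤ l'.length := by
  by_contra h
  push_neg at h
  have h1 : 0 < l.getD l'.length 0 := by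
    rw [l.getD_eq_getElem 0 h]
    exact hp _ (List.getElem_mem h)
  have h2 : l'.getD l'.length 0 = 0 := List.getD_eq_default _ _ le_rfl
  have := hsub l'.length
  omega

lemma colHeight_le (l l' : List ℕ) (hp : ∀ x ∈ l, 0 < x)
    (hsub : ∀ j, l.getD j 0 ≤ l'.getD j 0) (c : ℕ) : colHeight l c ≤ colHeight l' c := by
  have hlen := length_le_of_sub hp hsub
  rw [colHeight_eq, colHeight_eq]
  calc ∑ j ∈ Finset.range l.length, (if c < l.getD j 0 then 1 else 0)
      ≤ ∑ j ∈ Finset.range l.length, (if c < l'.getD j 0 then 1 else 0) := by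
        apply Finset.sum_le_sum
        intro j _
        have := hsub j
        split_ifs <;> omega
    _ ≤ ∑ j ∈ Finset.range l'.length, (if c < l'.getD j 0 then 1 else 0) := by
        apply Finset.sum_le_sum_of_subset (Finset.range_subset_range.mpr hlen)

lemma bfrOffset_succ (l : List ℕ) (c : ℕ) :
    bfrOffset l (c + 1) = bfrOffset l c + (colHeight l c - 1) :=
  Finset.sum_range_succ _ c

lemma bfrOffset_mono (l : List ℕ) {c d : ℕ} (h : c ≤ d) :
    bfrOffset l c ≤ bfrOffset l d :=
  Finset.sum_le_sum_of_subset (Finset.range_subset_range.mpr h)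

lemma bfrOffset_le (l l' : List ℕ) (hp : ∀ x ∈ l, 0 < x)
    (hsub : ∀ j, l.getD j 0 ≤ l'.getD j 0) (c : ℕ) :
    bfrOffset l c ≤ bfrOffset l' c := by
  apply Finset.sum_le_sum
  intro c' _
  have := colHeight_le l l' hp hsub c'
  omega

lemma bfrOffset_head {l : List ℕ} (hs : l.Pairwise (· ≥ ·)) :
    bfrOffset l (l.headD 0) + l.headD 0 = l.sum := by
  have h2 : ∑ c ∈ Finset.range (l.headD 0), colHeight l c = l.sum :=
    sum_colHeight _ l (fun r hr => le_headD_of_mem hs hr)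
  unfold bfrOffset
  calc (∑ c ∈ Finset.range (l.headD 0), (colHeight l c - 1)) + l.headD 0
      = ∑ c ∈ Finset.range (l.headD 0), ((colHeight l c - 1) + 1) := by
        rw [Finset.sum_add_distrib, Finset.sum_const, Finset.card_range, smul_eq_mul,
          mul_one]
    _ = ∑ c ∈ Finset.range (l.headD 0), colHeight l c := by
        apply Finset.sum_congr rfl
        intro c hc
        have := colHeight_pos_of_lt l c (Finset.mem_range.mp hc)
        omega
    _ = l.sum := h2

lemma exists_col (l : List ℕ) (i : ℕ) : ∀ k, 1 ≤ i → i ≤ bfrOffset l k →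
    ∃ c, c < k ∧ bfrOffset l c < i ∧ i ≤ bfrOffset l c + (colHeight l c - 1) := by
  intro k
  induction k with
  | zero => intro h1 h2; simp [bfrOffset] at h2; omega
  | succ k ih =>
    intro h1 h2
    by_cases h : i ≤ bfrOffset l k
    · obtain ⟨c, hc, h3, h4⟩ := ih h1 h
      exact ⟨c, by omega, h3, h4⟩
    · push_neg at h
      refine ⟨k, by omega, h, ?_⟩
      rw [bfrOffset_succ] at h2
      omega

lemma headD_le_sum (l : List ℕ) : l.headD 0 ≤ l.sum := by
  cases l with
  | nil => simp
  | cons a t => simp [List.sum_cons, Nat.le_add_right]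

lemma promote (l : List ℕ) (i j : ℕ) (hij : i ≤ j)
    (hbase : ∀ S : Finset ℕ, S ⊆ Finset.Icc 1 l.sum → S.card = j →
      esymS ℚ S i ∈ tanisaki ℚ l) :
    ∀ m, j ≤ m → ∀ S : Finset ℕ, S ⊆ Finset.Icc 1 l.sum → S.card = m →
      esymS ℚ S i ∈ tanisaki ℚ l := by
  intro m
  induction m with
  | zero => intro h S hS hc; exact hbase S hS (by omega)
  | succ m ih =>
    intro hm S hS hc
    rcases Nat.lt_or_ge j (m + 1) with hlt | hge
    · have hkey := sum_esymS_erase ℚ S i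
      have hmem : ∑ a ∈ S, esymS ℚ (S.erase a) i ∈ tanisaki ℚ l := by
        apply Ideal.sum_mem
        intro a ha
        exact ih (by omega) _ (fun x hx => hS (Finset.mem_of_mem_erase hx))
          (by simp [Finset.card_erase_of_mem ha, hc])
      rw [hkey, hc] at hmem
      have ht1 : i < m + 1 := by omega
      set t : ℕ := m + 1 - i with ht
      have ht0 : (t : ℚ) ≠ 0 := by
        have h0 : 0 < t := by omega
        exact_mod_cast h0.ne'
      rw [← Nat.cast_smul_eq_nsmul ℚ] at hmem
      have h2 := Ideal.mul_mem_left _ (C ((t : ℚ)⁻¹)) hmem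
      rwa [smul_eq_C_mul, ← mul_assoc, ← C_mul, inv_mul_cancel₀ ht0, C_1, one_mul] at h2
    · exact hbase S hS (by omega)

lemma lemmaA (n : ℕ) (hn : 2 ≤ n) (l l' : List ℕ)
    (hl : IsPartitionOf (n - 1) l) (hl' : IsPartitionOf n l')
    (hsub : ∀ j : ℕ, l.getD j 0 ≤ l'.getD j 0)
    (c i M : ℕ) (hc : c < l'.headD 0) (hi : i ∈ bfrLabels l' c)
    (hiM : i ≤ M) (hM1 : M ≤ n - 1) (hM3 : M = n - 1 - c ∨ M = n - c) :
    ∃ c'' : ℕ, c'' < l.headD 0 ∧ i ∈ bfrLabels l c'' ∧ i ≤ n - 1 - c'' ∧ n - 1 - c'' ≤ M := by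
  obtain ⟨hs, hp, hsum⟩ := hl
  obtain ⟨hs', hp', hsum'⟩ := hl'
  set m := l.headD 0 with hm
  set m' := l'.headD 0 with hm'
  -- basic numeric facts
  have hm'n : m' ≤ n := by rw [← hsum']; exact headD_le_sum l'
  have hmn : m ≤ n - 1 := by rw [← hsum]; exact headD_le_sum l
  have hm1 : 1 ≤ m := by
    rcases Nat.eq_zero_or_pos m with h0 | h0
    · exfalso
      cases l with
      | nil => simp at hsum; omega
      | cons a t =>
        have := hp a (by simp)
        simp only [List.headD_cons] at hm
        omega
    · exact h0
  have hmm' : m ≤ m' := by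
    have := hsub 0
    cases l with
    | nil => simp [hm]
    | cons a t =>
      cases l' with
      | nil =>
        exfalso; simp at hsum'; omega
      | cons a' t' => simpa [hm, hm'] using this
  have hm'm : m' ≤ m + 1 := by
    by_contra h
    push_neg at h
    have hA : ∑ x ∈ Finset.range m', colHeight l' x = n := by
      rw [sum_colHeight m' l' (fun r hr => le_headD_of_mem hs' hr), hsum']
    have hB : ∑ x ∈ Finset.range m, colHeight l x = n - 1 := by
      rw [sum_colHeight m l (fun r hr => le_headD_of_mem hs hr), hsum]
    have h1 : ∑ x ∈ Finset.range m, colHeight l x ≤ ∑ x ∈ Finset.range m, colHeight l' x :=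
      Finset.sum_le_sum (fun x _ => colHeight_le l l' hp hsub x)
    have hsplit : ∑ x ∈ Finset.Ico 0 m, colHeight l' x + ∑ x ∈ Finset.Ico m m', colHeight l' x
        = ∑ x ∈ Finset.Ico 0 m', colHeight l' x :=
      Finset.sum_Ico_consecutive _ (Nat.zero_le m) (by omega)
    have h2 : m' - m ≤ ∑ x ∈ Finset.Ico m m', colHeight l' x := by
      calc m' - m = ∑ _x ∈ Finset.Ico m m', 1 := by
            rw [Finset.sum_const, Nat.card_Ico, smul_eq_mul, mul_one]
        _ ≤ _ := Finset.sum_le_sum (fun x hx => colHeight_pos_of_lt l' x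
            (by have := Finset.mem_Ico.mp hx; omega))
    simp only [← Finset.range_eq_Ico] at hsplit
    omega
  have hoffm : bfrOffset l m + m = n - 1 := by rw [bfrOffset_head hs, hsum]
  have hoffm' : bfrOffset l' m' + m' = n := by rw [bfrOffset_head hs', hsum']
  -- case split on the label
  rw [bfrLabels, Finset.mem_union, Finset.mem_Icc, Finset.mem_singleton] at hi
  rcases hi with ⟨hi1, hi2⟩ | htop
  · -- non-top label of column c of l'
    have hub : i ≤ n - m' := by
      have e1 : bfrOffset l' c + (colHeight l' c - 1) = bfrOffset l' (c + 1) :=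
        (bfrOffset_succ l' c).symm
      have e2 : bfrOffset l' (c + 1) ≤ bfrOffset l' m' := bfrOffset_mono l' (by omega)
      omega
    by_cases hsmall : i ≤ n - 1 - m
    · obtain ⟨c'', hc''m, hlt, hub2⟩ := exists_col l i m (by omega) (by omega)
      have hcc : c ≤ c'' := by
        by_contra hcc
        push_neg at hcc
        have e1 : bfrOffset l c'' + (colHeight l c'' - 1) = bfrOffset l (c'' + 1) :=
          (bfrOffset_succ l c'').symm
        have e2 : bfrOffset l (c'' + 1) ≤ bfrOffset l c := bfrOffset_mono l (by omega)
        have e3 : bfrOffset l c ≤ bfrOffset l' c := bfrOffset_le l l' hp hsub c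
        omega
      refine ⟨c'', hc''m, ?_, by omega, by omega⟩
      rw [bfrLabels, Finset.mem_union, Finset.mem_Icc]
      exact Or.inl ⟨by omega, hub2⟩
    · push_neg at hsmall
      have hieq : i = n - m := by omega
      refine ⟨m - 1, by omega, ?_, by omega, by omega⟩
      rw [bfrLabels, Finset.mem_union, Finset.mem_singleton]
      right
      rw [hsum]
      omega
  · -- top label of column c of l'
    rw [hsum'] at htop
    have hMnc : M = n - c := by omega
    have hc1 : 1 ≤ c := by omega
    refine ⟨c - 1, by omega, ?_, by omega, by omega⟩
    rw [bfrLabels, Finset.mem_union, Finset.mem_singleton]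
    right
    rw [hsum]
    omega
/-- If `λ'` (a partition of `n`) is obtained from `λ` (a partition of `n-1`) by adding one
box, then under `ι_n* : ℚ[x_1,...,x_n] → ℚ[x_1,...,x_{n-1}]` (`x_i ↦ x_i` for `i < n`,
`x_n ↦ 0`) the Tanisaki ideals satisfy `ι_n*(I_{λ'}) ⊆ I_λ`. -/
theorem stmt19 (n : ℕ) (hn : 2 ≤ n) (l l' : List ℕ)
    (hl : IsPartitionOf (n - 1) l) (hl' : IsPartitionOf n l')
    (hsub : ∀ j : ℕ, l.getD j 0 ≤ l'.getD j 0) :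
    ∀ p ∈ tanisaki ℚ l',
      (aeval (fun i : ℕ => if i < n then X i else (0 : MvPolynomial ℕ ℚ))) p ∈
        tanisaki ℚ l := by
  intro p hp
  have hsum : l.sum = n - 1 := hl.2.2
  have hsum' : l'.sum = n := hl'.2.2
  rw [tanisaki] at hp
  have key : {p : MvPolynomial ℕ ℚ | ∃ c : ℕ, c < l'.headD 0 ∧ ∃ i ∈ bfrLabels l' c,
      ∃ S : Finset ℕ, S ⊆ Finset.Icc 1 l'.sum ∧ S.card = l'.sum - c ∧ p = esymS ℚ S i} ⊆
      ↑(Ideal.comap ((aeval (fun i : ℕ => if i < n then X i else (0 : MvPolynomial ℕ ℚ))) :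
        MvPolynomial ℕ ℚ →ₐ[ℚ] MvPolynomial ℕ ℚ) (tanisaki ℚ l)) := by
    rintro q ⟨c, hc, i, hiL, S, hS, hcard, rfl⟩
    simp only [SetLike.mem_coe, Ideal.mem_comap]
    rw [hsum'] at hS hcard
    have hSle : ∀ j ∈ S, j ≤ n := fun j hj => (Finset.mem_Icc.mp (hS hj)).2
    rw [aeval_esymS ℚ n S hSle i]
    set S' := S.erase n with hS'
    have hS'sub : S' ⊆ Finset.Icc 1 (n - 1) := by
      intro x hx
      obtain ⟨hxn, hxS⟩ := Finset.mem_erase.mp hx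
      have := Finset.mem_Icc.mp (hS hxS)
      rw [Finset.mem_Icc]
      omega
    have hM1 : S'.card ≤ n - 1 := by
      have h1 := Finset.card_le_card hS'sub
      rwa [Nat.card_Icc, Nat.add_sub_cancel] at h1
    have hM3 : S'.card = n - 1 - c ∨ S'.card = n - c := by
      by_cases hnS : n ∈ S
      · left
        have : S'.card = n - c - 1 := by
          rw [hS', Finset.card_erase_of_mem hnS, hcard]
        omega
      · right
        rw [hS', Finset.erase_eq_of_notMem hnS, hcard]
    by_cases hiM : i ≤ S'.card
    · obtain ⟨c'', hc'', hiL'', hile, hle2⟩ :=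
        lemmaA n hn l l' hl hl' hsub c i S'.card hc hiL hiM hM1 hM3
      have hbase : ∀ T : Finset ℕ, T ⊆ Finset.Icc 1 l.sum → T.card = n - 1 - c'' →
          esymS ℚ T i ∈ tanisaki ℚ l := by
        intro T hT hTc
        apply Ideal.subset_span
        exact ⟨c'', hc'', i, hiL'', T, hT, by rw [hsum]; exact hTc, rfl⟩
      exact promote l i (n - 1 - c'') hile hbase S'.card hle2 S'
        (by rw [hsum]; exact hS'sub) rfl
    · push_neg at hiM
      rw [esymS_zero_of_lt ℚ S' i hiM]
      exact Ideal.zero_mem _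
  have h2 := Ideal.span_le.mpr key hp
  exact Ideal.mem_comap.mp h2
end
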